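/- Let R be a (not necessarily commutative) ring with a discrete valuation v having nonnegative values, let Γ be a finite subgroup of the group of units of R, let σ ∈ R, and let m ≥ 0 be an integer. Suppose s is the least positive integer such that v(σ^s − γ) ≥ m for some γ ∈ Γ. Then for every integer n ≥ 1: there exists γ ∈ Γ with v(σ^n − γ) ≥ m if and only if s divides n. (Equivalently, the set S_m = {n ∈ ℤ_{>0} : v(σ^n − γ) ≥ m for some γ ∈ Γ} equals s·ℤ_{>0}.) -/

import Mathlib

/-- If s is the least positive integer with v(σ^s − γ) ≥ m for some γ in a finite subgroup Γ
of units, then for n ≥ 1 there exists γ ∈ Γ with v(σⁿ − γ) ≥ m if and only if s ∣ n. -/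
theorem valuation_subsequence_multiples {R : Type*} [Ring R]
    (v : R → WithTop ℤ)
    (hv0 : ∀ x : R, v x = ⊤ ↔ x = 0)
    (hvmul : ∀ x y : R, v (x * y) = v x + v y)
    (hvadd : ∀ x y : R, min (v x) (v y) ≤ v (x + y))
    (hnonneg : ∀ x : R, x ≠ 0 → 0 ≤ v x)
    (Γ : Subgroup Rˣ) (hΓfin : (Γ : Set Rˣ).Finite)
    (σ : R) (m : ℕ)
    (s : ℕ) (hs : 0 < s)
    (hsm : ∃ γ : Rˣ, γ ∈ Γ ∧ (m : WithTop ℤ) ≤ v (σ ^ s - (γ : R)))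
    (hleast : ∀ s' : ℕ, 0 < s' →
      (∃ γ : Rˣ, γ ∈ Γ ∧ (m : WithTop ℤ) ≤ v (σ ^ s' - (γ : R))) → s ≤ s') :
    ∀ n : ℕ, 1 ≤ n →
      ((∃ γ : Rˣ, γ ∈ Γ ∧ (m : WithTop ℤ) ≤ v (σ ^ n - (γ : R))) ↔ s ∣ n) := by
  intro n hn
  obtain ⟨γ₁, hγ₁Γ, hγ₁⟩ := hsm
  by_cases hR : (1 : R) = 0
  · -- trivial ring
    have hsub : Subsingleton R := subsingleton_of_zero_eq_one hR.symm
    have hall : ∀ k : ℕ, ∃ γ : Rˣ, γ ∈ Γ ∧ (m : WithTop ℤ) ≤ v (σ ^ k - (γ : R)) := by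
      intro k
      exact ⟨1, Γ.one_mem, by rw [(hv0 _).2 (Subsingleton.elim _ _)]; exact le_top⟩
    have hs1 : s = 1 := le_antisymm (hleast 1 one_pos (hall 1)) hs
    simp [hs1, hall n]
  · haveI : Nontrivial R := nontrivial_of_ne 1 0 hR
    -- v 1 = 0
    have hv1 : v 1 = 0 := by
      have h : v 1 = v 1 + v 1 := by rw [← hvmul, one_mul]
      have hne : v 1 ≠ ⊤ := fun ht => hR ((hv0 1).1 ht)
      lift v 1 to ℤ using hne with a ha
      have ha' : a = a + a := by exact_mod_cast h
      have : a = 0 := by omega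
      simp [this]
    -- v of a unit is 0
    have hvu : ∀ u : Rˣ, v (u : R) = 0 := by
      intro u
      have h1 : v (u : R) + v ((u⁻¹ : Rˣ) : R) = 0 := by
        rw [← hvmul, Units.mul_inv, hv1]
      have h2 : 0 ≤ v ((u⁻¹ : Rˣ) : R) := hnonneg _ (Units.ne_zero _)
      have h3 : v (u : R) ≤ 0 := by
        calc v (u : R) = v (u : R) + 0 := (add_zero _).symm
        _ ≤ v (u : R) + v ((u⁻¹ : Rˣ) : R) := add_le_add_right h2 _
        _ = 0 := h1
      exact le_antisymm h3 (hnonneg _ (Units.ne_zero _))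
    have hneg : ∀ x : R, v (-x) = v x := by
      intro x
      have : (-x : R) = ((-1 : Rˣ) : R) * x := by simp
      rw [this, hvmul, hvu, zero_add]
    have hsubmin : ∀ x y : R, min (v x) (v y) ≤ v (x - y) := by
      intro x y
      have := hvadd x (-y)
      rw [hneg] at this
      rw [sub_eq_add_neg]
      exact this
    have hmul_le_left : ∀ x y : R, v y ≤ v (x * y) := by
      intro x y
      by_cases hx : x = 0
      · simp [hx, (hv0 (0:R)).2 rfl]
      · rw [hvmul]
        calc v y = 0 + v y := (zero_add _).symm
        _ ≤ v x + v y := add_le_add_left (hnonneg x hx) _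
    have hmul_le_right : ∀ x y : R, v x ≤ v (x * y) := by
      intro x y
      by_cases hy : y = 0
      · simp [hy, (hv0 (0:R)).2 rfl]
      · rw [hvmul]
        calc v x = v x + 0 := (add_zero _).symm
        _ ≤ v x + v y := add_le_add_right (hnonneg y hy) _
    have hunit_left : ∀ (u : Rˣ) (x : R), v ((u : R) * x) = v x := by
      intro u x; rw [hvmul, hvu, zero_add]
    -- main claim by induction
    have claim : ∀ k : ℕ, (m : WithTop ℤ) ≤ v (σ ^ (s * k) - ((γ₁ : R)) ^ k) := by
      intro k
      induction k with
      | zero => simp [(hv0 (0:R)).2 rfl]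
      | succ k ih =>
        have key : σ ^ (s * (k + 1)) - (γ₁ : R) ^ (k + 1) =
            (σ ^ (s * k) - (γ₁ : R) ^ k) * σ ^ s + (γ₁ : R) ^ k * (σ ^ s - (γ₁ : R)) := by
          rw [Nat.mul_succ, pow_add, pow_succ]
          noncomm_ring
        rw [key]
        refine le_trans (le_min ?_ ?_) (hvadd _ _)
        · exact le_trans ih (hmul_le_right _ _)
        · have : (γ₁ : R) ^ k = ((γ₁ ^ k : Rˣ) : R) := by rw [Units.val_pow_eq_pow_val]
          rw [this, hunit_left]
          exact hγ₁
    constructor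
    · rintro ⟨γ, hγΓ, hγ⟩
      rcases Nat.eq_zero_or_pos (n % s) with hr | hr
      · exact Nat.dvd_of_mod_eq_zero hr
      · exfalso
        set q := n / s with hq
        set r := n % s with hrdef
        have hnqr : s * q + r = n := Nat.div_add_mod n s
        have h1 : (m : WithTop ℤ) ≤ v ((σ ^ (s * q) - (γ₁ : R) ^ q) * σ ^ r) :=
          le_trans (claim q) (hmul_le_right _ _)
        have heq1 : (σ ^ (s * q) - (γ₁ : R) ^ q) * σ ^ r = σ ^ n - (γ₁ : R) ^ q * σ ^ r := by
          rw [sub_mul, ← pow_add, hnqr]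
        rw [heq1] at h1
        have h2 : (m : WithTop ℤ) ≤ v ((γ₁ : R) ^ q * σ ^ r - (γ : R)) := by
          have heq2 : (γ₁ : R) ^ q * σ ^ r - (γ : R) =
              -(σ ^ n - (γ₁ : R) ^ q * σ ^ r) + (σ ^ n - (γ : R)) := by noncomm_ring
          rw [heq2]
          refine le_trans (le_min ?_ ?_) (hvadd _ _)
          · rw [hneg]; exact h1
          · exact hγ
        have h3 : (m : WithTop ℤ) ≤ v (σ ^ r - ((γ₁⁻¹ ^ q * γ : Rˣ) : R)) := by
          have heq3 : σ ^ r - ((γ₁⁻¹ ^ q * γ : Rˣ) : R) =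
              ((γ₁⁻¹ ^ q : Rˣ) : R) * ((γ₁ : R) ^ q * σ ^ r - (γ : R)) := by
            have hcancel : ((γ₁⁻¹ ^ q : Rˣ) : R) * (γ₁ : R) ^ q = 1 := by
              rw [← Units.val_pow_eq_pow_val, ← Units.val_mul, inv_pow, inv_mul_cancel]
              simp
            rw [mul_sub, ← mul_assoc, hcancel, one_mul, Units.val_mul]
          rw [heq3, hunit_left]
          exact h2
        have hle : s ≤ r := hleast r hr ⟨γ₁⁻¹ ^ q * γ, mul_mem (pow_mem (inv_mem hγ₁Γ) q) hγΓ, h3⟩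
        exact absurd hle (not_le.2 (Nat.mod_lt n hs))
    · rintro ⟨k, rfl⟩
      refine ⟨γ₁ ^ k, pow_mem hγ₁Γ k, ?_⟩
      rw [Units.val_pow_eq_pow_val]
      exact claim k
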